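/- Let $G$ be a complete $p$-valued group of finite rank with centre $Z$. Then (a) $Z$ is isolated in $G$ (i.e., $G/Z$ is torsion-free), and (b) for every open subgroup $U$ of $G$, the centre of $U$ equals $Z \cap U$. -/

import Mathlib

open scoped commutatorElement

namespace St19

/-! ### Discrete difference calculus on `ℕ → ℤ` -/

def dd (e : ℕ → ℤ) : ℕ → ℤ := fun n => e (n + 1) - e n

def Ii (e : ℕ → ℤ) : ℕ → ℤ := fun n => ∑ k ∈ Finset.range n, e k

def Deg (d : ℕ) (e : ℕ → ℤ) : Prop := ∀ n, (dd^[d] e) n = 0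

lemma dd_iterate_shift (e : ℕ → ℤ) (j : ℕ) :
    dd^[j] (fun n => e (n + 1)) = fun n => (dd^[j] e) (n + 1) := by
  induction j generalizing e with
  | zero => simp
  | succ j ih =>
      rw [Function.iterate_succ_apply, Function.iterate_succ_apply]
      have h : dd (fun n => e (n + 1)) = fun n => (dd e) (n + 1) := rfl
      rw [h, ih]

lemma deg_shift {d : ℕ} {e : ℕ → ℤ} (h : Deg d e) : Deg d (fun n => e (n + 1)) := by
  intro n; rw [dd_iterate_shift]; exact h _

lemma deg_dd {d : ℕ} {e : ℕ → ℤ} (h : Deg (d + 1) e) : Deg d (dd e) := by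
  intro n
  have h2 := h n
  rwa [Function.iterate_succ_apply] at h2

lemma deg_mono {d d' : ℕ} {e : ℕ → ℤ} (h : Deg d e) (hd : d ≤ d') : Deg d' e := by
  obtain ⟨k, rfl⟩ := Nat.exists_eq_add_of_le hd
  clear hd
  induction k with
  | zero => exact h
  | succ k ih =>
      intro n
      have he : (d + (k + 1)) = (d + k) + 1 := by ring
      rw [he, Function.iterate_succ_apply']
      show (dd^[d+k] e) (n+1) - (dd^[d+k] e) n = 0
      rw [ih n, ih (n+1)]; ring

lemma deg_const (c : ℤ) : Deg 1 (fun _ => c) := by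
  intro n; show (fun _ => c) (n+1) - (fun _ => c) n = 0; ring

lemma eq_const_of_deg_one {e : ℕ → ℤ} (h : Deg 1 e) : ∀ n, e n = e 0 := by
  intro n
  induction n with
  | zero => rfl
  | succ n ih =>
      have h1 : e (n+1) - e n = 0 := h n
      omega

lemma deg_id : Deg 2 (fun n => (n : ℤ)) := by
  intro n
  show dd (dd (fun n => (n:ℤ))) n = 0
  have h : dd (fun n => (n : ℤ)) = fun _ => 1 := by
    funext m; show ((m + 1 : ℕ) : ℤ) - m = 1; push_cast; ring
  rw [h]
  show (1 : ℤ) - 1 = 0; ring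

lemma Ii_zero (e : ℕ → ℤ) : Ii e 0 = 0 := by simp [Ii]

lemma Ii_succ (e : ℕ → ℤ) (n : ℕ) : Ii e (n + 1) = Ii e n + e n := by
  simp [Ii, Finset.sum_range_succ]

lemma dd_Ii (e : ℕ → ℤ) : dd (Ii e) = e := by
  funext n; show Ii e (n+1) - Ii e n = e n; rw [Ii_succ]; ring

lemma deg_Ii {d : ℕ} {e : ℕ → ℤ} (h : Deg d e) : Deg (d + 1) (Ii e) := by
  intro n
  rw [Function.iterate_succ_apply, dd_Ii]
  exact h n

/-- Newton's forward-difference formula. -/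
lemma newton (e : ℕ → ℤ) (n : ℕ) :
    e n = ∑ j ∈ Finset.range (n + 1), (n.choose j : ℤ) * (dd^[j] e) 0 := by
  induction n generalizing e with
  | zero => simp
  | succ n ih =>
      have ihs : e (n + 1) = ∑ j ∈ Finset.range (n + 1),
          (n.choose j : ℤ) * (dd^[j] (fun m => e (m + 1))) 0 := ih (fun m => e (m + 1))
      rw [ihs]
      have h2 : ∀ j, (dd^[j] (fun m => e (m+1))) 0 = (dd^[j] e) 0 + (dd^[j+1] e) 0 := by
        intro j
        rw [dd_iterate_shift]
        have h3 : (dd^[j+1] e) 0 = (dd^[j] e) 1 - (dd^[j] e) 0 := by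
          rw [Function.iterate_succ_apply']; rfl
        have h4 : (fun n => (dd^[j] e) (n+1)) 0 = (dd^[j] e) 1 := rfl
        rw [h4]
        omega
      set A : ℕ → ℤ := fun j => (dd^[j] e) 0 with hA
      have step1 : ∑ j ∈ Finset.range (n+1), (n.choose j : ℤ) * (dd^[j] (fun m => e (m+1))) 0
          = (∑ j ∈ Finset.range (n+1), (n.choose j : ℤ) * A j)
            + ∑ j ∈ Finset.range (n+1), (n.choose j : ℤ) * A (j+1) := by
        rw [← Finset.sum_add_distrib]
        refine Finset.sum_congr rfl fun j _ => ?_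
        rw [h2 j]; ring
      rw [step1]
      have sa : ∑ j ∈ Finset.range (n+1), (n.choose j : ℤ) * A j
          = (∑ j ∈ Finset.range (n+1), (n.choose (j+1) : ℤ) * A (j+1)) + A 0 := by
        rw [Finset.sum_range_succ' (fun j => (n.choose j : ℤ) * A j) n]
        rw [Finset.sum_range_succ (fun j => (n.choose (j+1) : ℤ) * A (j+1)) n]
        simp [Nat.choose_succ_self]
      rw [sa]
      have st : ∑ j ∈ Finset.range (n+2), ((n+1).choose j : ℤ) * A j
          = (∑ j ∈ Finset.range (n+1), ((n+1).choose (j+1) : ℤ) * A (j+1)) + A 0 := by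
        rw [Finset.sum_range_succ' (fun j => ((n+1).choose j : ℤ) * A j) (n+1)]
        simp
      rw [st]
      have key : ∑ j ∈ Finset.range (n+1), ((n+1).choose (j+1) : ℤ) * A (j+1)
          = (∑ j ∈ Finset.range (n+1), (n.choose (j+1) : ℤ) * A (j+1))
            + ∑ j ∈ Finset.range (n+1), (n.choose j : ℤ) * A (j+1) := by
        rw [← Finset.sum_add_distrib]
        refine Finset.sum_congr rfl fun j _ => ?_
        rw [Nat.choose_succ_succ (n) (j)]
        push_cast; ring
      rw [key]; ring

/-- Key divisibility: a degree-`< p` function vanishing at `0` is divisible by `p` at `p`. -/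
lemma dvd_eval_p {p : ℕ} (hp : p.Prime) {e : ℕ → ℤ} (h0 : e 0 = 0) (hd : Deg p e) :
    (p : ℤ) ∣ e p := by
  rw [newton e p]
  refine Finset.dvd_sum fun j hj => ?_
  rcases Nat.eq_zero_or_pos j with rfl | hjpos
  · simpa [h0] using Dvd.intro 0 rfl
  rcases eq_or_lt_of_le (Nat.lt_succ_iff.mp (Finset.mem_range.mp hj)) with rfl | hjlt
  · rw [hd 0]; simp
  · exact Dvd.dvd.mul_right
      (Int.natCast_dvd_natCast.mpr (hp.dvd_choose_self (by omega) hjlt)) _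

end St19
/-! ### Ordered products, term lists, basic identities -/

namespace St19

variable {K : Type*} [Group K]

/-- A term: a base element, a filtration index, a degree bound, and an exponent function. -/
structure Tm (K : Type*) where
  g : K
  i : ℕ
  d : ℕ
  e : ℕ → ℤ

def ev (t : Tm K) (n : ℕ) : K := t.g ^ (t.e n)

def evL (L : List (Tm K)) (n : ℕ) : K := (L.map (fun t => ev t n)).prod

def PP (F : ℕ → K) (n : ℕ) : K := ((List.range n).map F).prod

lemma evL_nil (n : ℕ) : evL ([] : List (Tm K)) n = 1 := rfl

lemma evL_cons (t : Tm K) (T : List (Tm K)) (n : ℕ) :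
    evL (t :: T) n = ev t n * evL T n := by
  simp [evL]

lemma evL_append (L₁ L₂ : List (Tm K)) (n : ℕ) :
    evL (L₁ ++ L₂) n = evL L₁ n * evL L₂ n := by
  simp [evL]

lemma evL_singleton (t : Tm K) (n : ℕ) : evL [t] n = ev t n := by
  simp [evL]

lemma PP_zero (F : ℕ → K) : PP F 0 = 1 := rfl

lemma PP_succ (F : ℕ → K) (n : ℕ) : PP F (n + 1) = PP F n * F n := by
  simp [PP, List.range_succ]

lemma PP_congr {F G : ℕ → K} (h : ∀ k, F k = G k) (n : ℕ) : PP F n = PP G n := by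
  induction n with
  | zero => rfl
  | succ n ih => rw [PP_succ, PP_succ, ih, h]

lemma PP_one {F : ℕ → K} (h : ∀ k, F k = 1) (n : ℕ) : PP F n = 1 := by
  induction n with
  | zero => rfl
  | succ n ih => rw [PP_succ, ih, h, one_mul]

/-- inverse of a represented function -/
def invL (L : List (Tm K)) : List (Tm K) :=
  (L.map fun t => ⟨t.g⁻¹, t.i, t.d, t.e⟩).reverse

lemma evL_invL (L : List (Tm K)) (n : ℕ) : evL (invL L) n = (evL L n)⁻¹ := by
  induction L with
  | nil => simp [invL, evL]
  | cons t T ih =>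
      rw [evL_cons, mul_inv_rev, ← ih]
      have h1 : invL (t :: T) = invL T ++ [⟨t.g⁻¹, t.i, t.d, t.e⟩] := by
        simp [invL]
      rw [h1, evL_append, evL_singleton]
      congr 1
      show (t.g⁻¹) ^ (t.e n) = (t.g ^ t.e n)⁻¹
      rw [inv_zpow]

/-- shift of a represented function -/
def shL (L : List (Tm K)) : List (Tm K) :=
  L.map fun t => ⟨t.g, t.i, t.d, fun n => t.e (n + 1)⟩

lemma evL_shL (L : List (Tm K)) (n : ℕ) : evL (shL L) n = evL L (n + 1) := by
  induction L with
  | nil => simp [shL, evL]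
  | cons t T ih =>
      show evL (⟨t.g, t.i, t.d, fun n => t.e (n+1)⟩ :: shL T) n = _
      rw [evL_cons, evL_cons, ih]; rfl

/-! ### Commutator identities -/

lemma comm_mul_first (a b c : K) : ⁅a * b, c⁆ = a * ⁅b, c⁆ * a⁻¹ * ⁅a, c⁆ := by
  simp only [commutatorElement_def]; group

lemma comm_mul_second (a c d : K) : ⁅a, c * d⁆ = ⁅a, c⁆ * (c * ⁅a, d⁆ * c⁻¹) := by
  simp only [commutatorElement_def]; group

lemma comm_abcd (a b c d : K) :
    ⁅a * b, c * d⁆ = a * ⁅b, c * d⁆ * a⁻¹ * ⁅a, c⁆ * (c * ⁅a, d⁆ * c⁻¹) := by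
  simp only [commutatorElement_def]; group

lemma conj_eq_comm (c r : K) : c * r * c⁻¹ = r * ⁅r⁻¹, c⁆ := by
  simp only [commutatorElement_def]; group

lemma comm_one_left (c : K) : ⁅(1 : K), c⁆ = 1 := by
  simp only [commutatorElement_def]; group

lemma comm_one_right (c : K) : ⁅c, (1 : K)⁆ = 1 := by
  simp only [commutatorElement_def]; group

/-! ### Product-collection identities -/

lemma collect (g : K) (e : ℕ → ℤ) (R : ℕ → K) (n : ℕ) :
    PP (fun k => g ^ e k * R k) n
      = PP (fun k => g ^ (Ii e (k + 1)) * R k * (g ^ (Ii e (k + 1)))⁻¹) n * g ^ (Ii e n) := by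
  induction n with
  | zero => rw [PP_zero, PP_zero, Ii_zero, zpow_zero, one_mul]
  | succ n ih =>
      rw [PP_succ, PP_succ, ih]
      have hz : g ^ Ii e (n + 1) = g ^ Ii e n * g ^ e n := by
        rw [← zpow_add, Ii_succ]
      rw [hz]; group

lemma merge (U V : ℕ → K) (n : ℕ) :
    PP (fun k => U k * V k) n
      = PP (fun k => PP U (k + 1) * V k * (PP U (k + 1))⁻¹) n * PP U n := by
  induction n with
  | zero => simp [PP_zero]
  | succ n ih =>
      rw [PP_succ, PP_succ, ih, PP_succ U n]
      group

lemma bilateral (F C₁ C₂ : ℕ → K) (h : ∀ n, F (n + 1) = C₁ n * F n * C₂ n) (n : ℕ) :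
    F n = (PP (fun k => (C₁ k)⁻¹) n)⁻¹ * F 0 * PP C₂ n := by
  induction n with
  | zero => simp [PP_zero]
  | succ n ih =>
      rw [h n, ih, PP_succ, PP_succ]
      group

end St19
/-! ### The collection machine -/

namespace St19

variable {K : Type*} [Group K]

def LOK (Γ : ℕ → Subgroup K) (flr : ℕ) (Q : ℤ) (L : List (Tm K)) : Prop :=
  ∀ t ∈ L, t.g ∈ Γ t.i ∧ Deg t.d t.e ∧ flr ≤ t.i ∧ (t.d : ℤ) + 2 ≤ (t.i : ℤ) + Q

lemma LOK_nil {Γ : ℕ → Subgroup K} {flr : ℕ} {Q : ℤ} : LOK Γ flr Q [] :=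
  fun t ht => absurd ht (List.not_mem_nil)

lemma LOK_append {Γ : ℕ → Subgroup K} {flr : ℕ} {Q : ℤ} {L₁ L₂ : List (Tm K)}
    (h₁ : LOK Γ flr Q L₁) (h₂ : LOK Γ flr Q L₂) : LOK Γ flr Q (L₁ ++ L₂) := by
  intro t ht
  rcases List.mem_append.mp ht with ht | ht
  · exact h₁ t ht
  · exact h₂ t ht

lemma LOK_weaken {Γ : ℕ → Subgroup K} {flr flr' : ℕ} {Q Q' : ℤ} {L : List (Tm K)}
    (h : LOK Γ flr Q L) (hf : flr' ≤ flr) (hQ : Q ≤ Q') : LOK Γ flr' Q' L := by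
  intro t ht
  obtain ⟨h1, h2, h3, h4⟩ := h t ht
  exact ⟨h1, h2, le_trans hf h3, by omega⟩

lemma LOK_invL {Γ : ℕ → Subgroup K} {flr : ℕ} {Q : ℤ} {L : List (Tm K)}
    (h : LOK Γ flr Q L) : LOK Γ flr Q (invL L) := by
  intro t ht
  rw [invL, List.mem_reverse, List.mem_map] at ht
  obtain ⟨s, hs, rfl⟩ := ht
  obtain ⟨h1, h2, h3, h4⟩ := h s hs
  exact ⟨inv_mem h1, h2, h3, h4⟩

lemma LOK_shL {Γ : ℕ → Subgroup K} {flr : ℕ} {Q : ℤ} {L : List (Tm K)}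
    (h : LOK Γ flr Q L) : LOK Γ flr Q (shL L) := by
  intro t ht
  rw [shL, List.mem_map] at ht
  obtain ⟨s, hs, rfl⟩ := ht
  obtain ⟨h1, h2, h3, h4⟩ := h s hs
  exact ⟨h1, deg_shift h2, h3, h4⟩

lemma gamma_le {Γ : ℕ → Subgroup K} (hmono : ∀ i, Γ (i + 1) ≤ Γ i)
    {i j : ℕ} (h : i ≤ j) : Γ j ≤ Γ i := by
  obtain ⟨k, rfl⟩ := Nat.exists_eq_add_of_le h
  clear h
  induction k with
  | zero => exact le_refl _
  | succ k ih => exact le_trans (hmono (i + k)) ih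

lemma evL_mem {Γ : ℕ → Subgroup K} (hmono : ∀ i, Γ (i + 1) ≤ Γ i)
    {flr : ℕ} {Q : ℤ} {L : List (Tm K)} (hL : LOK Γ flr Q L) (n : ℕ) :
    evL L n ∈ Γ flr := by
  refine Subgroup.list_prod_mem _ ?_
  intro x hx
  rw [List.mem_map] at hx
  obtain ⟨t, htL, rfl⟩ := hx
  obtain ⟨h1, _, h3, _⟩ := hL t htL
  exact gamma_le hmono h3 (Subgroup.zpow_mem _ h1 _)

lemma evL_one {p : ℕ} {Γ : ℕ → Subgroup K} (htriv : ∀ j, p - 1 ≤ j → Γ j = ⊥)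
    {flr : ℕ} {Q : ℤ} {L : List (Tm K)} (hL : LOK Γ flr Q L) (h : p - 1 ≤ flr) (n : ℕ) :
    evL L n = 1 := by
  refine List.prod_eq_one ?_
  intro x hx
  rw [List.mem_map] at hx
  obtain ⟨t, htL, rfl⟩ := hx
  obtain ⟨h1, _, h3, _⟩ := hL t htL
  rw [htriv t.i (le_trans h h3), Subgroup.mem_bot] at h1
  show t.g ^ _ = 1
  rw [h1, one_zpow]

/-! ### The four statements -/

def IntStmt (p : ℕ) (Γ : ℕ → Subgroup K) (r : ℕ) : Prop :=
  ∀ (flr : ℕ) (Q : ℤ) (L : List (Tm K)),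
    p ≤ flr + 1 + r → 1 ≤ flr → Q ≤ 3 → LOK Γ flr Q L →
    ∃ L', LOK Γ flr (Q + 1) L' ∧ (∀ t ∈ L', t.e 0 = 0) ∧
      ∀ n, evL L' n = PP (evL L) n

def Comm2Stmt (p : ℕ) (Γ : ℕ → Subgroup K) (r : ℕ) : Prop :=
  ∀ (A B dα dβ : ℕ) (qα qβ : ℤ) (t h : K) (α β : ℕ → ℤ),
    p ≤ A + B + 2 + r → t ∈ Γ A → h ∈ Γ B → Deg dα α → Deg dβ β →
    (dα : ℤ) ≤ (A : ℤ) + qα → (dβ : ℤ) ≤ (B : ℤ) + qβ → qα ≤ 2 → qβ ≤ 2 →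
    (∀ z w : ℤ, ⁅t ^ z, h ^ w⁆ ∈ Γ (A + B + 1)) →
    ∃ L, LOK Γ (A + B + 1) (qα + qβ) L ∧ ∀ n, evL L n = ⁅t ^ α n, h ^ β n⁆

def S51Stmt (p : ℕ) (Γ : ℕ → Subgroup K) (r : ℕ) : Prop :=
  ∀ (tm : Tm K) (f₂ : ℕ) (Q₁ Q₂ : ℤ) (L₂ : List (Tm K)),
    p ≤ tm.i + f₂ + 2 + r → 1 ≤ tm.i + f₂ → Q₁ ≤ 4 → Q₂ ≤ 4 →
    tm.g ∈ Γ tm.i → Deg tm.d tm.e → (tm.d : ℤ) + 2 ≤ (tm.i : ℤ) + Q₁ →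
    LOK Γ f₂ Q₂ L₂ →
    ∃ L, LOK Γ (tm.i + f₂ + 1) (Q₁ + Q₂ - 4) L ∧
      ∀ n, evL L n = ⁅ev tm n, evL L₂ n⁆

def S5Stmt (p : ℕ) (Γ : ℕ → Subgroup K) (r : ℕ) : Prop :=
  ∀ (f₁ f₂ : ℕ) (Q₁ Q₂ : ℤ) (L₁ L₂ : List (Tm K)),
    p ≤ f₁ + f₂ + 2 + r → 1 ≤ f₁ + f₂ → Q₁ ≤ 4 → Q₂ ≤ 4 →
    LOK Γ f₁ Q₁ L₁ → LOK Γ f₂ Q₂ L₂ →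
    ∃ L, LOK Γ (f₁ + f₂ + 1) (Q₁ + Q₂ - 4) L ∧
      ∀ n, evL L n = ⁅evL L₁ n, evL L₂ n⁆

theorem mega {p : ℕ} (Γ : ℕ → Subgroup K) (hp2 : 2 ≤ p)
    (hfil : ∀ i j, 1 ≤ i + j → ∀ g ∈ Γ i, ∀ h ∈ Γ j, ⁅g, h⁆ ∈ Γ (i + j + 1))
    (hmono : ∀ i, Γ (i + 1) ≤ Γ i)
    (htriv : ∀ j, p - 1 ≤ j → Γ j = ⊥) :
    ∀ r, IntStmt p Γ r ∧ Comm2Stmt p Γ r ∧ S51Stmt p Γ r ∧ S5Stmt p Γ r := by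
  intro r
  induction r using Nat.strong_induction_on with
  | _ r IH =>
  ----------------------------------------------------------------
  -- INT
  ----------------------------------------------------------------
  have hint : IntStmt p Γ r := by
    intro flr Q L hroom hflr hQ3 hL
    by_cases htr : p - 1 ≤ flr
    · refine ⟨[], LOK_nil, by simp, fun n => ?_⟩
      rw [evL_nil, PP_one (fun k => evL_one htriv hL htr k)]
    · have hr1 : 1 ≤ r := by omega
      obtain ⟨ihInt, ihC2, ihS51, ihS5⟩ := IH (r - 1) (by omega)
      clear IH
      revert hL
      induction L with
      | nil =>
          intro _
          refine ⟨[], LOK_nil, by simp, fun n => ?_⟩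
          rw [evL_nil, PP_one (fun k => evL_nil k)]
      | cons t T ihT =>
          intro hL
          obtain ⟨hg, hDeg, hfl, hcoup⟩ := hL t (List.mem_cons_self)
          have hT : LOK Γ flr Q T := fun s hs => hL s (List.mem_cons_of_mem t hs)
          obtain ⟨LIU, hLIU, hIU0, hIUev⟩ := ihT hT
          -- deep part D : commutator of (evL T)⁻¹ with the collection conjugator
          have hctok : LOK Γ t.i (Q + 1) [⟨t.g, t.i, t.d + 1, fun k => Ii t.e (k + 1)⟩] := by
            intro s hs
            rw [List.mem_singleton] at hs
            subst hs
            refine ⟨hg, deg_shift (deg_Ii hDeg), le_refl _, ?_⟩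
            show ((t.d + 1 : ℕ) : ℤ) + 2 ≤ (t.i : ℤ) + (Q + 1)
            push_cast
            omega
          obtain ⟨LD, hLD, hDev⟩ := ihS5 flr t.i Q (Q + 1) (invL T)
            [⟨t.g, t.i, t.d + 1, fun k => Ii t.e (k + 1)⟩]
            (by omega) (by omega) (by omega) (by omega) (LOK_invL hT) hctok
          have hLCev : ∀ n, evL (T ++ LD) n
              = t.g ^ (Ii t.e (n + 1)) * evL T n * (t.g ^ (Ii t.e (n + 1)))⁻¹ := by
            intro n
            rw [evL_append, hDev n, evL_invL, evL_singleton, ← conj_eq_comm]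
            rfl
          -- collection
          have hcol : ∀ n, PP (evL (t :: T)) n
              = PP (evL (T ++ LD)) n * t.g ^ (Ii t.e n) := by
            intro n
            have hone : ∀ k, evL (t :: T) k = t.g ^ t.e k * evL T k :=
              fun k => evL_cons t T k
            rw [PP_congr hone n, collect]
            congr 1
            exact PP_congr (fun k => (hLCev k).symm) n
          -- merge
          have hmer : ∀ n, PP (evL (T ++ LD)) n
              = PP (fun k => PP (evL T) (k + 1) * evL LD k * (PP (evL T) (k + 1))⁻¹) n
                * PP (evL T) n := by
            intro n
            rw [PP_congr (fun k => evL_append T LD k) n, merge]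
          -- the deep integrand
          obtain ⟨LE, hLE, hLEev⟩ := ihS5 (flr + 1) flr (2 * Q - 3) (Q + 1) (invL LD)
            (shL LIU) (by omega) (by omega) (by omega) (by omega)
            (LOK_invL (LOK_weaken hLD (by omega) (by omega)))
            (LOK_shL hLIU)
          have hYint : LOK Γ (flr + 1) (2 * Q - 3) (LD ++ LE) :=
            LOK_append (LOK_weaken hLD (by omega) (by omega))
              (LOK_weaken hLE (by omega) (by omega))
          have hYintev : ∀ k, evL (LD ++ LE) k
              = PP (evL T) (k + 1) * evL LD k * (PP (evL T) (k + 1))⁻¹ := by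
            intro k
            rw [evL_append, hLEev k, evL_invL, evL_shL, hIUev (k + 1), ← conj_eq_comm]
          obtain ⟨LY, hLY, hLY0, hLYev⟩ := ihInt (flr + 1) (2 * Q - 3) (LD ++ LE)
            (by omega) (by omega) (by omega) hYint
          -- assemble
          refine ⟨LY ++ LIU ++ [⟨t.g, t.i, t.d + 1, Ii t.e⟩], ?_, ?_, ?_⟩
          · refine LOK_append (LOK_append
              (LOK_weaken hLY (by omega) (by omega))
              (LOK_weaken hLIU (by omega) (by omega))) ?_
            intro s hs
            rw [List.mem_singleton] at hs
            subst hs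
            refine ⟨hg, deg_Ii hDeg, hfl, ?_⟩
            show ((t.d + 1 : ℕ) : ℤ) + 2 ≤ (t.i : ℤ) + (Q + 1)
            push_cast
            omega
          · intro s hs
            rcases List.mem_append.mp hs with hs | hs
            · rcases List.mem_append.mp hs with hs | hs
              · exact hLY0 s hs
              · exact hIU0 s hs
            · rw [List.mem_singleton] at hs
              subst hs
              exact Ii_zero t.e
          · intro n
            rw [evL_append, evL_append, evL_singleton, hcol n, hmer n]
            have h1 : evL LY n = PP (fun k => PP (evL T) (k + 1) * evL LD k
                * (PP (evL T) (k + 1))⁻¹) n := by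
              rw [hLYev n]
              exact PP_congr (fun k => hYintev k) n
            rw [h1, hIUev n]
            rfl
  ----------------------------------------------------------------
  -- COMM2
  ----------------------------------------------------------------
  have hcomm2 : Comm2Stmt p Γ r := by
    intro A B dα dβ qα qβ t h α β hroom ht hh hα hβ hqA hqB hqα2 hqβ2 hth
    by_cases htr : p - 1 ≤ A + B + 1
    · refine ⟨[], LOK_nil, fun n => ?_⟩
      have hmem := hth (α n) (β n)
      rw [htriv _ htr, Subgroup.mem_bot] at hmem
      rw [evL_nil, hmem]
    · have hr1 : 1 ≤ r := by omega
      obtain ⟨ihInt, ihC2, ihS51, ihS5⟩ := IH (r - 1) (by omega)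
      clear IH
      -- inner induction on the degree budget
      have inner : ∀ (s dα dβ : ℕ) (qα qβ : ℤ) (α β : ℕ → ℤ),
          dα + dβ ≤ s → Deg dα α → Deg dβ β →
          (dα : ℤ) ≤ (A : ℤ) + qα → (dβ : ℤ) ≤ (B : ℤ) + qβ → qα ≤ 2 → qβ ≤ 2 →
          ∃ L, LOK Γ (A + B + 1) (qα + qβ) L ∧ ∀ n, evL L n = ⁅t ^ α n, h ^ β n⁆ := by
        intro s
        induction s with
        | zero =>
            intro dα dβ qα qβ α β hs hα hβ _ _ _ _
            have hdα : dα = 0 := by omega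
            subst hdα
            refine ⟨[], LOK_nil, fun n => ?_⟩
            have h0 : α n = 0 := hα n
            rw [evL_nil, h0, zpow_zero, comm_one_left]
        | succ s ihs =>
            intro dα dβ qα qβ α β hs hα hβ hqA' hqB' hqα2' hqβ2'
            rcases Nat.eq_zero_or_pos dα with hdα0 | hdα1
            · subst hdα0
              refine ⟨[], LOK_nil, fun n => ?_⟩
              have h0 : α n = 0 := hα n
              rw [evL_nil, h0, zpow_zero, comm_one_left]
            rcases Nat.eq_zero_or_pos dβ with hdβ0 | hdβ1
            · subst hdβ0
              refine ⟨[], LOK_nil, fun n => ?_⟩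
              have h0 : β n = 0 := hβ n
              rw [evL_nil, h0, zpow_zero, comm_one_right]
            by_cases h11 : dα = 1 ∧ dβ = 1
            · -- constant case
              refine ⟨[⟨⁅t ^ α 0, h ^ β 0⁆, A + B + 1, 1, fun _ => 1⟩], ?_, fun n => ?_⟩
              · intro u hu
                rw [List.mem_singleton] at hu
                subst hu
                refine ⟨hth (α 0) (β 0), deg_const 1, le_refl _, ?_⟩
                show ((1 : ℕ) : ℤ) + 2 ≤ ((A + B + 1 : ℕ) : ℤ) + (qα + qβ)
                push_cast
                omega
              · rw [evL_singleton]
                show ⁅t ^ α 0, h ^ β 0⁆ ^ (1 : ℤ) = _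
                rw [zpow_one]
                have e1 : α n = α 0 := eq_const_of_deg_one (by simpa [h11.1] using hα) n
                have e2 : β n = β 0 := eq_const_of_deg_one (by simpa [h11.2] using hβ) n
                rw [e1, e2]
            · -- recursive case : dα + dβ ≥ 3
              have hs3 : 3 ≤ dα + dβ := by omega
              -- C₁ : inner commutator ⁅t^(dd α n), h^(β (n+1))⁆, conjugated by t^(α n)
              have hddα : Deg (dα - 1) (dd α) := by
                apply deg_dd
                rwa [Nat.sub_add_cancel hdα1]
              obtain ⟨LX₁, hLX₁, hX₁ev⟩ := ihs (dα - 1) dβ (qα - 1) qβ (dd α)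
                (fun n => β (n + 1)) (by omega) hddα (deg_shift hβ)
                (by omega) hqB' (by omega) hqβ2'
              obtain ⟨LE₁, hLE₁, hE₁ev⟩ := ihS5 (A + B + 1) A (qα - 1 + qβ) (qα + 2)
                (invL LX₁) [⟨t, A, dα, α⟩] (by omega) (by omega) (by omega) (by omega)
                (LOK_invL hLX₁)
                (by
                  intro u hu
                  rw [List.mem_singleton] at hu
                  subst hu
                  refine ⟨ht, hα, le_refl _, ?_⟩
                  show (dα : ℤ) + 2 ≤ (A : ℤ) + (qα + 2)
                  omega)
              have hLC₁ : LOK Γ (A + B + 1) (qα + qβ - 1) (LX₁ ++ LE₁) :=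
                LOK_append (LOK_weaken hLX₁ (le_refl _) (by omega))
                  (LOK_weaken hLE₁ (by omega) (by omega))
              have hC₁ev : ∀ n, evL (LX₁ ++ LE₁) n
                  = t ^ α n * ⁅t ^ dd α n, h ^ β (n + 1)⁆ * (t ^ α n)⁻¹ := by
                intro n
                rw [evL_append, hE₁ev n, evL_invL, evL_singleton, hX₁ev n, ← conj_eq_comm]
                rfl
              -- C₂ : inner commutator ⁅t^(α n), h^(dd β n)⁆ conjugated by h^(β n)
              have hddβ : Deg (dβ - 1) (dd β) := by
                apply deg_dd
                rwa [Nat.sub_add_cancel hdβ1]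
              obtain ⟨LX₂, hLX₂, hX₂ev⟩ := ihs dα (dβ - 1) qα (qβ - 1) α (dd β)
                (by omega) hα hddβ hqA'
                (by omega) hqα2' (by omega)
              obtain ⟨LE₂, hLE₂, hE₂ev⟩ := ihS5 (A + B + 1) B (qα + (qβ - 1)) (qβ + 2)
                (invL LX₂) [⟨h, B, dβ, β⟩] (by omega) (by omega) (by omega) (by omega)
                (LOK_invL hLX₂)
                (by
                  intro u hu
                  rw [List.mem_singleton] at hu
                  subst hu
                  refine ⟨hh, hβ, le_refl _, ?_⟩
                  show (dβ : ℤ) + 2 ≤ (B : ℤ) + (qβ + 2)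
                  omega)
              have hLC₂ : LOK Γ (A + B + 1) (qα + qβ - 1) (LX₂ ++ LE₂) :=
                LOK_append (LOK_weaken hLX₂ (le_refl _) (by omega))
                  (LOK_weaken hLE₂ (by omega) (by omega))
              have hC₂ev : ∀ n, evL (LX₂ ++ LE₂) n
                  = h ^ β n * ⁅t ^ α n, h ^ dd β n⁆ * (h ^ β n)⁻¹ := by
                intro n
                rw [evL_append, hE₂ev n, evL_invL, evL_singleton, hX₂ev n, ← conj_eq_comm]
                rfl
              -- integrate both sides
              obtain ⟨LPi, hLPi, _, hPiev⟩ := hint (A + B + 1) (qα + qβ - 1)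
                (invL (LX₁ ++ LE₁)) (by omega) (by omega) (by omega) (LOK_invL hLC₁)
              obtain ⟨LQi, hLQi, _, hQiev⟩ := hint (A + B + 1) (qα + qβ - 1)
                (LX₂ ++ LE₂) (by omega) (by omega) (by omega) hLC₂
              -- the recursion identity
              have hrec : ∀ n, ⁅t ^ α (n + 1), h ^ β (n + 1)⁆
                  = evL (LX₁ ++ LE₁) n * ⁅t ^ α n, h ^ β n⁆ * evL (LX₂ ++ LE₂) n := by
                intro n
                rw [hC₁ev n, hC₂ev n]
                have e1 : t ^ α (n + 1) = t ^ α n * t ^ dd α n := by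
                  rw [← zpow_add]
                  congr 1
                  show α (n + 1) = α n + (α (n + 1) - α n)
                  ring
                have e2 : h ^ β (n + 1) = h ^ β n * h ^ dd β n := by
                  rw [← zpow_add]
                  congr 1
                  show β (n + 1) = β n + (β (n + 1) - β n)
                  ring
                rw [e1, e2]
                exact comm_abcd (t ^ α n) (t ^ dd α n) (h ^ β n) (h ^ dd β n)
              have hbil : ∀ n, ⁅t ^ α n, h ^ β n⁆
                  = (PP (fun k => (evL (LX₁ ++ LE₁) k)⁻¹) n)⁻¹ * ⁅t ^ α 0, h ^ β 0⁆
                    * PP (evL (LX₂ ++ LE₂)) n :=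
                fun n => bilateral (fun n => ⁅t ^ α n, h ^ β n⁆)
                  (fun n => evL (LX₁ ++ LE₁) n) (fun n => evL (LX₂ ++ LE₂) n) hrec n
              -- assemble
              refine ⟨invL LPi ++ [⟨⁅t ^ α 0, h ^ β 0⁆, A + B + 1, 1, fun _ => 1⟩] ++ LQi,
                ?_, fun n => ?_⟩
              · refine LOK_append (LOK_append (LOK_invL (LOK_weaken hLPi (le_refl _) (by omega))) ?_)
                  (LOK_weaken hLQi (le_refl _) (by omega))
                intro u hu
                rw [List.mem_singleton] at hu
                subst hu
                refine ⟨hth (α 0) (β 0), deg_const 1, le_refl _, ?_⟩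
                show ((1 : ℕ) : ℤ) + 2 ≤ ((A + B + 1 : ℕ) : ℤ) + (qα + qβ)
                push_cast
                omega
              · rw [evL_append, evL_append, evL_singleton, evL_invL, hPiev n, hQiev n]
                have hip : PP (evL (invL (LX₁ ++ LE₁))) n
                    = PP (fun k => (evL (LX₁ ++ LE₁) k)⁻¹) n :=
                  PP_congr (fun k => evL_invL _ k) n
                rw [hip]
                show (PP (fun k => (evL (LX₁ ++ LE₁) k)⁻¹) n)⁻¹
                    * (⁅t ^ α 0, h ^ β 0⁆ ^ (1 : ℤ)) * PP (evL (LX₂ ++ LE₂)) n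
                    = ⁅t ^ α n, h ^ β n⁆
                rw [zpow_one]
                exact (hbil n).symm
      exact inner (dα + dβ) dα dβ qα qβ α β (le_refl _) hα hβ hqA hqB hqα2 hqβ2
  ----------------------------------------------------------------
  -- S51 (single term against list)
  ----------------------------------------------------------------
  have hs51 : S51Stmt p Γ r := by
    intro tm f₂ Q₁ Q₂ L₂ hroom h1 hQ₁ hQ₂ hg hDeg hcoup hL₂
    by_cases htr : p - 1 ≤ tm.i + f₂ + 1
    · refine ⟨[], LOK_nil, fun n => ?_⟩
      have hmem : ⁅ev tm n, evL L₂ n⁆ ∈ Γ (tm.i + f₂ + 1) :=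
        hfil tm.i f₂ h1 _ (Subgroup.zpow_mem _ hg _) _ (evL_mem hmono hL₂ n)
      rw [htriv _ htr, Subgroup.mem_bot] at hmem
      rw [evL_nil, hmem]
    · have hr1 : 1 ≤ r := by omega
      obtain ⟨ihInt, ihC2, ihS51, ihS5⟩ := IH (r - 1) (by omega)
      clear IH
      revert hL₂
      induction L₂ with
      | nil =>
          intro _
          refine ⟨[], LOK_nil, fun n => ?_⟩
          rw [evL_nil, comm_one_right]
      | cons s S ihS =>
          intro hL₂
          obtain ⟨hsg, hsDeg, hsfl, hscoup⟩ := hL₂ s (List.mem_cons_self)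
          have hS : LOK Γ f₂ Q₂ S := fun u hu => hL₂ u (List.mem_cons_of_mem s hu)
          obtain ⟨Lad, hLad, hadev⟩ := ihS hS
          -- ⁅a, c⁆ where c is the head
          obtain ⟨Lac, hLac, hacev⟩ := hcomm2 tm.i s.i tm.d s.d (Q₁ - 2) (Q₂ - 2)
            tm.g s.g tm.e s.e (by omega) hg hsg hDeg hsDeg (by omega) (by omega)
            (by omega) (by omega)
            (fun z w => hfil tm.i s.i (by omega) _ (Subgroup.zpow_mem _ hg _) _
              (Subgroup.zpow_mem _ hsg _))
          -- conjugate ⁅a, evL S⁆ by head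
          obtain ⟨LEc, hLEc, hEcev⟩ := ihS5 (tm.i + f₂ + 1) f₂ (Q₁ + Q₂ - 4) Q₂
            (invL Lad) [s] (by omega) (by omega) (by omega) (by omega)
            (LOK_invL hLad)
            (by
              intro u hu
              rw [List.mem_singleton] at hu
              subst hu
              exact ⟨hsg, hsDeg, hsfl, hscoup⟩)
          refine ⟨Lac ++ (Lad ++ LEc), ?_, fun n => ?_⟩
          · refine LOK_append (LOK_weaken hLac (by omega) (by omega)) ?_
            exact LOK_append (LOK_weaken hLad (le_refl _) (by omega))
              (LOK_weaken hLEc (by omega) (by omega))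
          · rw [evL_append, evL_append, hEcev n, evL_invL, hacev n, hadev n,
              ← conj_eq_comm, evL_singleton, evL_cons]
            exact (comm_mul_second (ev tm n) (ev s n) (evL S n)).symm
  ----------------------------------------------------------------
  -- S5
  ----------------------------------------------------------------
  have hs5 : S5Stmt p Γ r := by
    intro f₁ f₂ Q₁ Q₂ L₁ L₂ hroom h1 hQ₁ hQ₂ hL₁ hL₂
    by_cases htr : p - 1 ≤ f₁ + f₂ + 1
    · refine ⟨[], LOK_nil, fun n => ?_⟩
      have hmem : ⁅evL L₁ n, evL L₂ n⁆ ∈ Γ (f₁ + f₂ + 1) :=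
        hfil f₁ f₂ h1 _ (evL_mem hmono hL₁ n) _ (evL_mem hmono hL₂ n)
      rw [htriv _ htr, Subgroup.mem_bot] at hmem
      rw [evL_nil, hmem]
    · have hr1 : 1 ≤ r := by omega
      obtain ⟨ihInt, ihC2, ihS51, ihS5⟩ := IH (r - 1) (by omega)
      clear IH
      revert hL₁
      induction L₁ with
      | nil =>
          intro _
          refine ⟨[], LOK_nil, fun n => ?_⟩
          rw [evL_nil, comm_one_left]
      | cons t T ihT =>
          intro hL₁
          obtain ⟨htg, htDeg, htfl, htcoup⟩ := hL₁ t (List.mem_cons_self)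
          have hT : LOK Γ f₁ Q₁ T := fun u hu => hL₁ u (List.mem_cons_of_mem t hu)
          obtain ⟨Lbc, hLbc, hbcev⟩ := ihT hT
          -- conjugate ⁅evL T, evL L₂⁆ by head
          obtain ⟨LEb, hLEb, hEbev⟩ := ihS5 (f₁ + f₂ + 1) f₁ (Q₁ + Q₂ - 4) Q₁
            (invL Lbc) [t] (by omega) (by omega) (by omega) (by omega)
            (LOK_invL hLbc)
            (by
              intro u hu
              rw [List.mem_singleton] at hu
              subst hu
              exact ⟨htg, htDeg, htfl, htcoup⟩)
          -- head against L₂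
          obtain ⟨Lac, hLac, hacev⟩ := hs51 t f₂ Q₁ Q₂ L₂ (by omega) (by omega)
            hQ₁ hQ₂ htg htDeg htcoup hL₂
          refine ⟨(Lbc ++ LEb) ++ Lac, ?_, fun n => ?_⟩
          · refine LOK_append ?_ (LOK_weaken hLac (by omega) (by omega))
            exact LOK_append (LOK_weaken hLbc (le_refl _) (by omega))
              (LOK_weaken hLEb (by omega) (by omega))
          · rw [evL_append, evL_append, hEbev n, evL_invL, hbcev n, hacev n,
              ← conj_eq_comm, evL_singleton, evL_cons]
            exact (comm_mul_first (ev t n) (evL T n) (evL L₂ n)).symm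
  exact ⟨hint, hcomm2, hs51, hs5⟩

end St19
/-! ### Theorem C : the p-power map is multiplicative in filtered groups -/

namespace St19

theorem power_hom {K : Type*} [Group K] {p : ℕ} (hp : p.Prime) (Γ : ℕ → Subgroup K)
    (hfil : ∀ i j, 1 ≤ i + j → ∀ g ∈ Γ i, ∀ h ∈ Γ j, ⁅g, h⁆ ∈ Γ (i + j + 1))
    (hmono : ∀ i, Γ (i + 1) ≤ Γ i)
    (htriv : ∀ j, p - 1 ≤ j → Γ j = ⊥)
    (hexp : ∀ g ∈ Γ 1, g ^ p = 1)
    (x y : K) (hx : x ∈ Γ 0) (hy : y ∈ Γ 0)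
    (hyx : ∀ z w : ℤ, ⁅y ^ z, x ^ w⁆ ∈ Γ 1) :
    (x * y) ^ p = x ^ p * y ^ p := by
  obtain ⟨hint, hcomm2, -, hs5⟩ := mega Γ hp.two_le hfil hmono htriv p
  -- the commutator function k n = ⁅y^n, x⁆
  obtain ⟨Lk, hLk, hkev⟩ := hcomm2 0 0 2 1 2 1 y x (fun n => (n : ℤ)) (fun _ => (1 : ℤ))
    (by omega) hy hx deg_id (deg_const 1) (by norm_num) (by norm_num)
    (by norm_num) (by norm_num) (fun z w => hyx z w)
  -- conjugate it by x^n
  obtain ⟨LE, hLE, hEev⟩ := hs5 1 0 3 4 (invL Lk) [⟨x, 0, 2, fun n => (n : ℤ)⟩]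
    (by omega) (by omega) (by norm_num) (by norm_num)
    (LOK_invL (LOK_weaken hLk (le_refl _) (by norm_num)))
    (by
      intro u hu
      rw [List.mem_singleton] at hu
      subst hu
      exact ⟨hx, deg_id, Nat.zero_le _, by norm_num⟩)
  have hLG : LOK Γ 1 3 (Lk ++ LE) :=
    LOK_append hLk (LOK_weaken hLE (by omega) (by norm_num))
  have hGev : ∀ n, evL (Lk ++ LE) n
      = x ^ (n : ℤ) * ⁅y ^ (n : ℤ), x ^ (1 : ℤ)⁆ * (x ^ (n : ℤ))⁻¹ := by
    intro n
    rw [evL_append, hEev n, evL_invL, evL_singleton, hkev n, ← conj_eq_comm]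
    rfl
  -- integrate
  obtain ⟨Lf, hLf, hLf0, hfev⟩ := hint 1 3 (Lk ++ LE) (by omega) (le_refl _)
    (le_refl _) hLG
  -- identify the integral
  have hff : ∀ n, PP (evL (Lk ++ LE)) n = (x * y) ^ n * (y ^ n)⁻¹ * (x ^ n)⁻¹ := by
    intro n
    induction n with
    | zero => simp [PP_zero]
    | succ n ih =>
        rw [PP_succ, ih, hGev n]
        rw [zpow_natCast, zpow_natCast, zpow_one, pow_succ (x * y), pow_succ y,
          pow_succ x]
        simp only [commutatorElement_def]
        group
  -- evaluate at p
  have hfp : evL Lf p = 1 := by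
    refine List.prod_eq_one ?_
    intro u hu
    rw [List.mem_map] at hu
    obtain ⟨tm, htm, rfl⟩ := hu
    obtain ⟨h1, h2, h3, h4⟩ := hLf tm htm
    by_cases hdeep : p - 1 ≤ tm.i
    · rw [htriv tm.i hdeep, Subgroup.mem_bot] at h1
      show tm.g ^ _ = 1
      rw [h1, one_zpow]
    · have hdp : tm.d ≤ p := by omega
      obtain ⟨c, hc⟩ := dvd_eval_p hp (hLf0 tm htm) (deg_mono h2 hdp)
      show tm.g ^ tm.e p = 1
      rw [hc, zpow_mul]
      have hg1 : tm.g ^ (p : ℤ) = 1 := by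
        rw [zpow_natCast]
        exact hexp tm.g (gamma_le hmono h3 h1)
      rw [hg1, one_zpow]
  have h1 : (x * y) ^ p * (y ^ p)⁻¹ * (x ^ p)⁻¹ = 1 := by
    rw [← hff p, ← hfev p, hfp]
  have h2 := mul_inv_eq_one.mp h1
  exact mul_inv_eq_iff_eq_mul.mp h2

end St19
/-! ### The valuation layer -/

namespace St19

section Val

variable {G : Type*} [Group G] {p : ℕ} {ω : G → WithTop ℝ}

lemma omega_one (htop : ∀ x : G, ω x = ⊤ ↔ x = 1) : ω (1 : G) = ⊤ := (htop 1).mpr rfl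

lemma omega_inv (hquot : ∀ x y : G, min (ω x) (ω y) ≤ ω (x * y⁻¹))
    (htop : ∀ x : G, ω x = ⊤ ↔ x = 1) (x : G) : ω x⁻¹ = ω x := by
  have key : ∀ y : G, ω y ≤ ω y⁻¹ := by
    intro y
    have h := hquot 1 y
    rw [omega_one htop, one_mul, min_top_left] at h
    exact h
  refine le_antisymm ?_ (key x)
  have h := key x⁻¹
  rwa [inv_inv] at h

lemma omega_mul (hquot : ∀ x y : G, min (ω x) (ω y) ≤ ω (x * y⁻¹))
    (htop : ∀ x : G, ω x = ⊤ ↔ x = 1) (x y : G) : min (ω x) (ω y) ≤ ω (x * y) := by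
  have h := hquot x y⁻¹
  rwa [inv_inv, omega_inv hquot htop] at h

lemma omega_comm' (hquot : ∀ x y : G, min (ω x) (ω y) ≤ ω (x * y⁻¹))
    (hcomm : ∀ x y : G, ω x + ω y ≤ ω (x⁻¹ * y⁻¹ * x * y))
    (htop : ∀ x : G, ω x = ⊤ ↔ x = 1) (x y : G) :
    ω x + ω y ≤ ω ⁅x, y⁆ := by
  have h := hcomm x⁻¹ y⁻¹
  rw [omega_inv hquot htop, omega_inv hquot htop, inv_inv, inv_inv] at h
  exact h

lemma omega_nonneg (hp : p.Prime) (hgt : ∀ x : G, ((((p : ℝ) - 1)⁻¹ : ℝ) : WithTop ℝ) < ω x)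
    (x : G) : (0 : WithTop ℝ) ≤ ω x := by
  refine le_of_lt (lt_of_le_of_lt ?_ (hgt x))
  have h0 : (0 : ℝ) ≤ ((p : ℝ) - 1)⁻¹ := by
    apply inv_nonneg.mpr
    have := hp.two_le
    have : (2 : ℝ) ≤ (p : ℝ) := by exact_mod_cast this
    linarith
  rw [show ((0 : WithTop ℝ)) = (((0 : ℝ)) : WithTop ℝ) by norm_cast]
  exact_mod_cast h0

/-- level subgroups -/
def Wsub (ω : G → WithTop ℝ) (hquot : ∀ x y : G, min (ω x) (ω y) ≤ ω (x * y⁻¹))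
    (htop : ∀ x : G, ω x = ⊤ ↔ x = 1) (τ : ℝ) : Subgroup G where
  carrier := {g | (τ : WithTop ℝ) ≤ ω g}
  one_mem' := by
    simp only [Set.mem_setOf_eq, omega_one htop]
    exact le_top
  mul_mem' := by
    intro a b ha hb
    exact le_trans (le_min ha hb) (omega_mul hquot htop a b)
  inv_mem' := by
    intro a ha
    simp only [Set.mem_setOf_eq, omega_inv hquot htop]
    exact ha

/-- strict level subgroups -/
def Wplus (ω : G → WithTop ℝ) (hquot : ∀ x y : G, min (ω x) (ω y) ≤ ω (x * y⁻¹))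
    (htop : ∀ x : G, ω x = ⊤ ↔ x = 1) (τ : ℝ) : Subgroup G where
  carrier := {g | (τ : WithTop ℝ) < ω g}
  one_mem' := by
    simp only [Set.mem_setOf_eq, omega_one htop]
    exact WithTop.coe_lt_top τ
  mul_mem' := by
    intro a b ha hb
    exact lt_of_lt_of_le (lt_min ha hb) (omega_mul hquot htop a b)
  inv_mem' := by
    intro a ha
    simp only [Set.mem_setOf_eq, omega_inv hquot htop]
    exact ha

lemma mem_Wsub {hquot htop} {τ : ℝ} {g : G} :
    g ∈ Wsub ω hquot htop τ ↔ (τ : WithTop ℝ) ≤ ω g := Iff.rfl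

lemma mem_Wplus {hquot htop} {τ : ℝ} {g : G} :
    g ∈ Wplus ω hquot htop τ ↔ (τ : WithTop ℝ) < ω g := Iff.rfl

lemma omega_conj (hp : p.Prime) (hquot : ∀ x y : G, min (ω x) (ω y) ≤ ω (x * y⁻¹))
    (hcomm : ∀ x y : G, ω x + ω y ≤ ω (x⁻¹ * y⁻¹ * x * y))
    (htop : ∀ x : G, ω x = ⊤ ↔ x = 1)
    (hgt : ∀ x : G, ((((p : ℝ) - 1)⁻¹ : ℝ) : WithTop ℝ) < ω x)
    (c g : G) : ω (c * g * c⁻¹) = ω g := by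
  have key : ∀ u v : G, ω v ≤ ω (u * v * u⁻¹) := by
    intro u v
    rw [conj_eq_comm u v]
    refine le_trans (le_min (le_refl _) ?_) (omega_mul hquot htop v ⁅v⁻¹, u⁆)
    refine le_trans ?_ (omega_comm' hquot hcomm htop v⁻¹ u)
    rw [omega_inv hquot htop]
    calc ω v = ω v + 0 := by rw [add_zero]
      _ ≤ ω v + ω u := by
          exact add_le_add_right (omega_nonneg hp hgt u) _
  refine le_antisymm ?_ (key c g)
  have h := key c⁻¹ (c * g * c⁻¹)
  have he : c⁻¹ * (c * g * c⁻¹) * c⁻¹⁻¹ = g := by group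
  rwa [he] at h

lemma omega_zpow_le (hquot : ∀ x y : G, min (ω x) (ω y) ≤ ω (x * y⁻¹))
    (htop : ∀ x : G, ω x = ⊤ ↔ x = 1) (g : G) (z : ℤ) : ω g ≤ ω (g ^ z) := by
  rcases eq_or_ne g 1 with rfl | hg
  · rw [one_zpow]
  · have hωg : ω g ≠ ⊤ := fun h => hg ((htop g).mp h)
    obtain ⟨τ, hτ⟩ := WithTop.ne_top_iff_exists.mp hωg
    have hmem : g ∈ Wsub ω hquot htop τ := le_of_eq hτ
    have := Subgroup.zpow_mem (Wsub ω hquot htop τ) hmem z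
    rw [← hτ]
    exact this

lemma omega_pow_le (hquot : ∀ x y : G, min (ω x) (ω y) ≤ ω (x * y⁻¹))
    (htop : ∀ x : G, ω x = ⊤ ↔ x = 1) (g : G) (m : ℕ) : ω g ≤ ω (g ^ m) := by
  have := omega_zpow_le hquot htop g (m : ℤ)
  rwa [zpow_natCast] at this

lemma omega_mul_deep (hquot : ∀ x y : G, min (ω x) (ω y) ≤ ω (x * y⁻¹))
    (htop : ∀ x : G, ω x = ⊤ ↔ x = 1) {u v : G} (h : ω v < ω u) :
    ω (u * v) = ω v := by
  refine le_antisymm ?_ ?_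
  · by_contra hcon
    push_neg at hcon
    have h2 : min (ω u⁻¹) (ω (u * v)) ≤ ω (u⁻¹ * (u * v)) :=
      omega_mul hquot htop u⁻¹ (u * v)
    rw [inv_mul_cancel_left, omega_inv hquot htop] at h2
    have : ω v < min (ω u) (ω (u * v)) := lt_min h hcon
    exact absurd h2 (not_le.mpr this)
  · refine le_trans ?_ (omega_mul hquot htop u v)
    rw [min_eq_right (le_of_lt h)]

end Val

end St19
/-! ### Main valuation lemma and injectivity of power maps -/

namespace St19

lemma PP_map {G H : Type*} [Group G] [Group H] (φ : G →* H) (F : ℕ → G) (n : ℕ) :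
    φ (PP F n) = PP (fun k => φ (F k)) n := by
  induction n with
  | zero => simp [PP_zero]
  | succ n ih => rw [PP_succ, PP_succ, map_mul, ih]

lemma PP_const {G : Type*} [Group G] (x : G) (n : ℕ) : PP (fun _ => x) n = x ^ n := by
  induction n with
  | zero => simp [PP_zero]
  | succ n ih => rw [PP_succ, ih, pow_succ]

lemma conjpow {G : Type*} [Group G] (x y : G) (m : ℕ) :
    (x * y * x⁻¹) ^ m = x * y ^ m * x⁻¹ := by
  induction m with
  | zero => simp
  | succ m ih => rw [pow_succ, pow_succ, ih]; group

lemma coe_lt_add_pos {t : ℝ} {x : WithTop ℝ} (hx : 0 < x) :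
    (t : WithTop ℝ) < (t : WithTop ℝ) + x := by
  rcases eq_or_ne x ⊤ with rfl | hxt
  · rw [add_top]
    exact WithTop.coe_lt_top t
  · obtain ⟨s, rfl⟩ := WithTop.ne_top_iff_exists.mp hxt
    have hs : (0 : ℝ) < s := by exact_mod_cast hx
    rw [← WithTop.coe_add]
    exact WithTop.coe_lt_coe.mpr (by linarith)

section MainVal

variable {G : Type*} [Group G] {p : ℕ}

/-- The main valuation lemma: `ω(aᵖb⁻ᵖ) = ω(ab⁻¹) + 1`. -/
lemma main_val (hp : p.Prime) (ω : G → WithTop ℝ)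
    (hquot : ∀ x y : G, min (ω x) (ω y) ≤ ω (x * y⁻¹))
    (hcomm : ∀ x y : G, ω x + ω y ≤ ω (x⁻¹ * y⁻¹ * x * y))
    (htop : ∀ x : G, ω x = ⊤ ↔ x = 1)
    (hgt : ∀ x : G, ((((p : ℝ) - 1)⁻¹ : ℝ) : WithTop ℝ) < ω x)
    (hpow : ∀ x : G, ω (x ^ p) = ω x + 1)
    (a b : G) (hab : a * b⁻¹ ≠ 1) :
    ω (a ^ p * (b ^ p)⁻¹) = ω (a * b⁻¹) + 1 := by
  rcases eq_or_ne b 1 with rfl | hb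
  · simp only [inv_one, mul_one, one_pow]
    exact hpow a
  · set c := a * b⁻¹ with hc
    have hcne : c ≠ 1 := hab
    have hoc : ω c ≠ ⊤ := fun h => hcne ((htop c).mp h)
    have hob : ω b ≠ ⊤ := fun h => hb ((htop b).mp h)
    obtain ⟨t, ht⟩ := WithTop.ne_top_iff_exists.mp hoc
    obtain ⟨bv, hbv⟩ := WithTop.ne_top_iff_exists.mp hob
    set ε : ℝ := ((p : ℝ) - 1)⁻¹ with hε
    have hpR : (2 : ℝ) ≤ (p : ℝ) := by exact_mod_cast hp.two_le
    have hεpos : 0 < ε := by rw [hε]; apply inv_pos.mpr; linarith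
    have hεt : ε < t := by
      have h := hgt c
      rw [← ht] at h
      exact_mod_cast h
    have hεb : ε < bv := by
      have h := hgt b
      rw [← hbv] at h
      exact_mod_cast h
    have hε1 : ε * ((p : ℝ) - 1) = 1 := by
      rw [hε, inv_mul_cancel₀ (by linarith : (p : ℝ) - 1 ≠ 0)]
    set μ : ℝ := min t bv with hμ
    have hεμ : ε < μ := lt_min hεt hεb
    have hμpos : 0 < μ := lt_trans hεpos hεμ
    have hμt : μ ≤ t := min_le_left t bv
    have hμb : μ ≤ bv := min_le_right t bv
    -- the quotient by the deep subgroup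
    set N : Subgroup G := Wplus ω hquot htop (t + 1) with hN
    haveI hNnorm : N.Normal := by
      constructor
      intro n hn g
      show ((t + 1 : ℝ) : WithTop ℝ) < ω (g * n * g⁻¹)
      rw [omega_conj hp hquot hcomm htop hgt g n]
      exact hn
    set π : G →* G ⧸ N := QuotientGroup.mk' N with hπ
    -- the filtration on the quotient
    set ρ : ℕ → ℝ := fun i => Nat.rec μ (fun j _ => t + bv + j * μ) i with hρ
    have hρ0 : ρ 0 = μ := rfl
    have hρs : ∀ j, ρ (j + 1) = t + bv + j * μ := fun j => rfl
    have hρ1 : ρ 1 = t + bv := by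
      have h := hρs 0
      norm_num at h
      exact h
    set Γ : ℕ → Subgroup (G ⧸ N) := fun i => (Wsub ω hquot htop (ρ i)).map π with hΓ
    -- hypothesis verification
    have hfil : ∀ i j, 1 ≤ i + j → ∀ g ∈ Γ i, ∀ h ∈ Γ j, ⁅g, h⁆ ∈ Γ (i + j + 1) := by
      intro i j hij gq hgq hq hhq
      obtain ⟨g, hg, rfl⟩ := Subgroup.mem_map.mp hgq
      obtain ⟨h, hh, rfl⟩ := Subgroup.mem_map.mp hhq
      rw [← map_commutatorElement]
      apply Subgroup.mem_map_of_mem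
      show ((ρ (i + j + 1) : ℝ) : WithTop ℝ) ≤ ω ⁅g, h⁆
      have hreal : ρ (i + j + 1) ≤ ρ i + ρ j := by
        rcases i with _ | i <;> rcases j with _ | j
        · omega
        · rw [hρ0, hρs, hρs]
          push_cast
          ring_nf
          linarith
        · rw [hρ0, hρs, hρs]
          push_cast
          ring_nf
          linarith
        · rw [hρs, hρs, hρs]
          push_cast
          nlinarith [hμpos]
      calc ((ρ (i + j + 1) : ℝ) : WithTop ℝ) ≤ ((ρ i + ρ j : ℝ) : WithTop ℝ) := by
            exact_mod_cast hreal
        _ = ((ρ i : ℝ) : WithTop ℝ) + ((ρ j : ℝ) : WithTop ℝ) := by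
            rw [WithTop.coe_add]
        _ ≤ ω g + ω h := add_le_add hg hh
        _ ≤ ω ⁅g, h⁆ := omega_comm' hquot hcomm htop g h
    have hmono : ∀ i, Γ (i + 1) ≤ Γ i := by
      intro i
      apply Subgroup.map_mono
      intro g hg
      have hreal : ρ i ≤ ρ (i + 1) := by
        rcases i with _ | i
        · rw [hρ0, hρs]
          push_cast
          linarith
        · rw [hρs, hρs]
          push_cast
          nlinarith [hμpos]
      exact le_trans (WithTop.coe_le_coe.mpr hreal) hg
    have htriv : ∀ j, p - 1 ≤ j → Γ j = ⊥ := by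
      intro j hj
      have hj1 : 1 ≤ j := by
        have := hp.two_le
        omega
      obtain ⟨j', rfl⟩ : ∃ j', j = j' + 1 := ⟨j - 1, by omega⟩
      refine (Subgroup.map_eq_bot_iff _).mpr ?_
      rw [hπ, QuotientGroup.ker_mk']
      intro g hg
      show ((t + 1 : ℝ) : WithTop ℝ) < ω g
      refine lt_of_lt_of_le ?_ hg
      apply WithTop.coe_lt_coe.mpr
      rw [hρs]
      have hj' : ((p : ℝ) - 2) ≤ (j' : ℝ) := by
        have h2 : p - 2 ≤ j' := by omega
        calc ((p : ℝ) - 2) = ((p - 2 : ℕ) : ℝ) := by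
              rw [Nat.cast_sub hp.two_le]
              norm_num
          _ ≤ (j' : ℝ) := by exact_mod_cast h2
      have k1 : ((p : ℝ) - 2) * ε ≤ ((p : ℝ) - 2) * μ :=
        mul_le_mul_of_nonneg_left (le_of_lt hεμ) (by linarith)
      have k2 : ((p : ℝ) - 2) * μ ≤ (j' : ℝ) * μ :=
        mul_le_mul_of_nonneg_right hj' (le_of_lt hμpos)
      have k3 : ε + ((p : ℝ) - 2) * ε = 1 := by
        rw [← hε1]
        ring
      linarith
    have hexp : ∀ g ∈ Γ 1, g ^ p = 1 := by
      intro gq hgq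
      obtain ⟨g, hg, rfl⟩ := Subgroup.mem_map.mp hgq
      rw [← map_pow]
      have hmem : g ^ p ∈ N := by
        show ((t + 1 : ℝ) : WithTop ℝ) < ω (g ^ p)
        have hg1 : ((ρ 1 : ℝ) : WithTop ℝ) ≤ ω g := hg
        rw [hρ1] at hg1
        calc ((t + 1 : ℝ) : WithTop ℝ) < ((t + bv + 1 : ℝ) : WithTop ℝ) := by
              apply WithTop.coe_lt_coe.mpr
              linarith
          _ = ((t + bv : ℝ) : WithTop ℝ) + 1 := by
              rw [← WithTop.coe_one, ← WithTop.coe_add]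
          _ ≤ ω g + 1 := add_le_add_left hg1 1
          _ = ω (g ^ p) := (hpow g).symm
      have hker : g ^ p ∈ π.ker := by
        rw [hπ, QuotientGroup.ker_mk']
        exact hmem
      exact MonoidHom.mem_ker.mp hker
    have hxmem : π c ∈ Γ 0 := by
      apply Subgroup.mem_map_of_mem
      show ((ρ 0 : ℝ) : WithTop ℝ) ≤ ω c
      rw [hρ0, ← ht]
      exact WithTop.coe_le_coe.mpr hμt
    have hymem : π b ∈ Γ 0 := by
      apply Subgroup.mem_map_of_mem
      show ((ρ 0 : ℝ) : WithTop ℝ) ≤ ω b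
      rw [hρ0, ← hbv]
      exact WithTop.coe_le_coe.mpr hμb
    have hyx : ∀ z w : ℤ, ⁅(π b) ^ z, (π c) ^ w⁆ ∈ Γ 1 := by
      intro z w
      rw [← map_zpow, ← map_zpow, ← map_commutatorElement]
      apply Subgroup.mem_map_of_mem
      show ((ρ 1 : ℝ) : WithTop ℝ) ≤ ω ⁅b ^ z, c ^ w⁆
      rw [hρ1]
      calc ((t + bv : ℝ) : WithTop ℝ) = ((bv : ℝ) : WithTop ℝ) + ((t : ℝ) : WithTop ℝ) := by
            rw [add_comm t bv, WithTop.coe_add]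
        _ ≤ ω (b ^ z) + ω (c ^ w) := by
            refine add_le_add ?_ ?_
            · rw [hbv]
              exact omega_zpow_le hquot htop b z
            · rw [ht]
              exact omega_zpow_le hquot htop c w
        _ ≤ ω ⁅b ^ z, c ^ w⁆ := omega_comm' hquot hcomm htop (b ^ z) (c ^ w)
    -- apply the abstract theorem
    have hph := power_hom hp Γ hfil hmono htriv hexp (π c) (π b) hxmem hymem hyx
    -- translate back
    have hcb : c * b = a := by
      rw [hc]
      group
    have hker : a ^ p * ((c ^ p * b ^ p))⁻¹ ∈ N := by
      have h1 : π (a ^ p * (c ^ p * b ^ p)⁻¹) = 1 := by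
        rw [map_mul, map_inv, map_mul, map_pow, map_pow, map_pow, ← hph, ← map_mul,
          hcb]
        simp
      have : a ^ p * (c ^ p * b ^ p)⁻¹ ∈ π.ker := MonoidHom.mem_ker.mpr h1
      rwa [hπ, QuotientGroup.ker_mk'] at this
    have hsplit : a ^ p * (b ^ p)⁻¹ = (a ^ p * (c ^ p * b ^ p)⁻¹) * c ^ p := by
      group
    rw [hsplit]
    have hcp : ω (c ^ p) = ((t : ℝ) : WithTop ℝ) + 1 := by
      rw [hpow c, ht]
    have hlt : ω (c ^ p) < ω (a ^ p * (c ^ p * b ^ p)⁻¹) := by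
      rw [hcp]
      refine lt_of_le_of_lt (le_of_eq ?_) hker
      rw [← WithTop.coe_one, ← WithTop.coe_add]
    rw [omega_mul_deep hquot htop hlt, hcp, ← ht]

end MainVal

end St19
/-! ### Injectivity of power maps and the final theorem -/

namespace St19

section Inj

variable {G : Type*} [Group G] {p : ℕ}

lemma root_inj (hp : p.Prime) (ω : G → WithTop ℝ)
    (hquot : ∀ x y : G, min (ω x) (ω y) ≤ ω (x * y⁻¹))
    (hcomm : ∀ x y : G, ω x + ω y ≤ ω (x⁻¹ * y⁻¹ * x * y))
    (htop : ∀ x : G, ω x = ⊤ ↔ x = 1)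
    (hgt : ∀ x : G, ((((p : ℝ) - 1)⁻¹ : ℝ) : WithTop ℝ) < ω x)
    (hpow : ∀ x : G, ω (x ^ p) = ω x + 1)
    (a b : G) (hab : a ^ p = b ^ p) : a = b := by
  by_contra hne
  have hcne : a * b⁻¹ ≠ 1 := fun h => hne (mul_inv_eq_one.mp h)
  have hml := main_val hp ω hquot hcomm htop hgt hpow a b hcne
  have h1 : a ^ p * (b ^ p)⁻¹ = 1 := by rw [hab, mul_inv_cancel]
  rw [h1, omega_one htop] at hml
  have hoc : ω (a * b⁻¹) ≠ ⊤ := fun h => hcne ((htop _).mp h)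
  obtain ⟨t, ht⟩ := WithTop.ne_top_iff_exists.mp hoc
  rw [← ht, ← WithTop.coe_one, ← WithTop.coe_add] at hml
  exact (WithTop.coe_ne_top (a := t + 1)) hml.symm

lemma pk_inj (hp : p.Prime) (ω : G → WithTop ℝ)
    (hquot : ∀ x y : G, min (ω x) (ω y) ≤ ω (x * y⁻¹))
    (hcomm : ∀ x y : G, ω x + ω y ≤ ω (x⁻¹ * y⁻¹ * x * y))
    (htop : ∀ x : G, ω x = ⊤ ↔ x = 1)
    (hgt : ∀ x : G, ((((p : ℝ) - 1)⁻¹ : ℝ) : WithTop ℝ) < ω x)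
    (hpow : ∀ x : G, ω (x ^ p) = ω x + 1)
    (k : ℕ) (a b : G) (hab : a ^ (p ^ k) = b ^ (p ^ k)) : a = b := by
  induction k generalizing a b with
  | zero => simpa using hab
  | succ k ih =>
      refine ih a b (root_inj hp ω hquot hcomm htop hgt hpow _ _ ?_)
      rw [← pow_mul, ← pow_mul, ← pow_succ]
      exact hab

lemma coprime_inj (hp : p.Prime) (ω : G → WithTop ℝ)
    (hquot : ∀ x y : G, min (ω x) (ω y) ≤ ω (x * y⁻¹))
    (hcomm : ∀ x y : G, ω x + ω y ≤ ω (x⁻¹ * y⁻¹ * x * y))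
    (htop : ∀ x : G, ω x = ⊤ ↔ x = 1)
    (hgt : ∀ x : G, ((((p : ℝ) - 1)⁻¹ : ℝ) : WithTop ℝ) < ω x)
    (hpow : ∀ x : G, ω (x ^ p) = ω x + 1)
    (M : ℕ) (hM : ¬ p ∣ M) (a b : G) (hab : a ^ M = b ^ M) : a = b := by
  by_contra hne
  have hcne : a * b⁻¹ ≠ 1 := fun h => hne (mul_inv_eq_one.mp h)
  set c := a * b⁻¹ with hc
  have hoc : ω c ≠ ⊤ := fun h => hcne ((htop _).mp h)
  obtain ⟨t, ht⟩ := WithTop.ne_top_iff_exists.mp hoc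
  have hεnn : (0 : WithTop ℝ) ≤ ((((p : ℝ) - 1)⁻¹ : ℝ) : WithTop ℝ) := by
    have h2 : (2 : ℝ) ≤ (p : ℝ) := by exact_mod_cast hp.two_le
    rw [show ((0 : WithTop ℝ)) = (((0 : ℝ)) : WithTop ℝ) by norm_cast]
    apply WithTop.coe_le_coe.mpr
    apply inv_nonneg.mpr
    linarith
  have homega_pos : ∀ x : G, (0 : WithTop ℝ) < ω x :=
    fun x => lt_of_le_of_lt hεnn (hgt x)
  -- the quotient modulo the level of c
  set N : Subgroup G := Wplus ω hquot htop t with hN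
  haveI hNnorm : N.Normal := by
    constructor
    intro n hn g
    show ((t : ℝ) : WithTop ℝ) < ω (g * n * g⁻¹)
    rw [omega_conj hp hquot hcomm htop hgt g n]
    exact hn
  set π : G →* G ⧸ N := QuotientGroup.mk' N with hπ
  -- the product identity
  have hid : ∀ m : ℕ, PP (fun i => b ^ i * c * (b ^ i)⁻¹) m = a ^ m * (b ^ m)⁻¹ := by
    intro m
    induction m with
    | zero => simp [PP_zero]
    | succ m ih =>
        rw [PP_succ, ih, hc, pow_succ a, pow_succ b]
        group
  -- each conjugate has the same image as c
  have hconj : ∀ i : ℕ, π (b ^ i * c * (b ^ i)⁻¹) = π c := by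
    intro i
    rw [conj_eq_comm (b ^ i) c, map_mul]
    have hdeep : ⁅c⁻¹, b ^ i⁆ ∈ N := by
      show ((t : ℝ) : WithTop ℝ) < ω ⁅c⁻¹, b ^ i⁆
      have h1 : ((t : ℝ) : WithTop ℝ) + ω (b ^ i) ≤ ω ⁅c⁻¹, b ^ i⁆ := by
        refine le_trans (le_of_eq ?_) (omega_comm' hquot hcomm htop c⁻¹ (b ^ i))
        rw [omega_inv hquot htop, ht]
      refine lt_of_lt_of_le ?_ h1
      exact coe_lt_add_pos (homega_pos (b ^ i))
    have h2 : π ⁅c⁻¹, b ^ i⁆ = 1 := by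
      refine MonoidHom.mem_ker.mp ?_
      rw [hπ, QuotientGroup.ker_mk']
      exact hdeep
    rw [h2, mul_one]
  -- hence (π c)^M = 1
  have hobs : (π c) ^ M = 1 := by
    calc (π c) ^ M = PP (fun _ => π c) M := (PP_const _ _).symm
      _ = PP (fun i => π (b ^ i * c * (b ^ i)⁻¹)) M :=
          PP_congr (fun i => (hconj i).symm) M
      _ = π (PP (fun i => b ^ i * c * (b ^ i)⁻¹) M) := (PP_map π _ M).symm
      _ = π (a ^ M * (b ^ M)⁻¹) := by rw [hid M]
      _ = 1 := by rw [hab, mul_inv_cancel, map_one]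
  have hMdeep : c ^ M ∈ N := by
    have h1 : π (c ^ M) = 1 := by rw [map_pow, hobs]
    have h2 : c ^ M ∈ π.ker := MonoidHom.mem_ker.mpr h1
    rwa [hπ, QuotientGroup.ker_mk'] at h2
  -- Bézout
  have hcop : IsCoprime (M : ℤ) (p : ℤ) := by
    rw [Int.isCoprime_iff_gcd_eq_one]
    exact_mod_cast (Nat.coprime_comm.mp (hp.coprime_iff_not_dvd.mpr hM))
  obtain ⟨u, v, huv⟩ := hcop
  have hsplit : c = (c ^ M) ^ u * (c ^ p) ^ v := by
    have h1 : c = c ^ ((M : ℤ) * u + (p : ℤ) * v) := by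
      rw [show (M : ℤ) * u + (p : ℤ) * v = 1 by linarith [huv], zpow_one]
    conv_lhs => rw [h1]
    rw [zpow_add, zpow_mul, zpow_mul, zpow_natCast, zpow_natCast]
  have hA : ((t : ℝ) : WithTop ℝ) < ω ((c ^ M) ^ u) :=
    lt_of_lt_of_le hMdeep (omega_zpow_le hquot htop _ u)
  have hB : ((t : ℝ) : WithTop ℝ) < ω ((c ^ p) ^ v) := by
    refine lt_of_lt_of_le ?_ (omega_zpow_le hquot htop _ v)
    rw [hpow c, ← ht]
    exact coe_lt_add_pos (by norm_num : (0 : WithTop ℝ) < 1)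
  have hfin : ((t : ℝ) : WithTop ℝ) < ω c := by
    rw [hsplit]
    exact lt_of_lt_of_le (lt_min hA hB) (omega_mul hquot htop _ _)
  rw [← ht] at hfin
  exact lt_irrefl _ hfin

lemma omega_pow_pk {ω : G → WithTop ℝ} (hpow : ∀ x : G, ω (x ^ p) = ω x + 1)
    (k : ℕ) (x : G) : ω (x ^ (p ^ k)) = ω x + ((k : ℝ) : WithTop ℝ) := by
  induction k with
  | zero => simp
  | succ k ih =>
      have h1 : x ^ (p ^ (k + 1)) = (x ^ (p ^ k)) ^ p := by
        rw [← pow_mul, pow_succ]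
      rw [h1, hpow, ih, add_assoc]
      congr 1
      rw [← WithTop.coe_one, ← WithTop.coe_add]
      norm_num

end Inj

end St19

theorem centre_isolated_and_centre_of_open_subgroup
    (p : ℕ) (hp : p.Prime) (G : Type*) [Group G]
    (ω : G → WithTop ℝ)
    -- `ω` is a `p`-valuation:
    (hquot : ∀ x y : G, min (ω x) (ω y) ≤ ω (x * y⁻¹))
    (hcomm : ∀ x y : G, ω x + ω y ≤ ω (x⁻¹ * y⁻¹ * x * y))
    (htop : ∀ x : G, ω x = ⊤ ↔ x = 1)
    (hgt : ∀ x : G, ((((p : ℝ) - 1)⁻¹ : ℝ) : WithTop ℝ) < ω x)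
    (hpow : ∀ x : G, ω (x ^ p) = ω x + 1)
    -- `G` is complete:
    (hcomplete : ∀ c : ℕ → G,
      (∀ C : ℝ, ∃ t : ℕ, ∀ i ≥ t, ∀ j ≥ t, (C : WithTop ℝ) ≤ ω (c i * (c j)⁻¹)) →
      ∃ L : G, ∀ C : ℝ, ∃ t : ℕ, ∀ i ≥ t, (C : WithTop ℝ) ≤ ω (c i * L⁻¹)) :
    -- (a) the centre is isolated in `G`
    (∀ (g : G) (n : ℕ), 0 < n → g ^ n ∈ Subgroup.center G → g ∈ Subgroup.center G) ∧
    -- (b) for every open subgroup `U`, `Z(U) = Z(G) ∩ U`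
    (∀ U : Subgroup G,
      (∃ ν : ℝ, ∀ g : G, ((ν : ℝ) : WithTop ℝ) ≤ ω g → g ∈ U) →
      ∀ u ∈ U, (∀ x ∈ U, u * x = x * u) ↔ u ∈ Subgroup.center G) := by
  have pkinj : ∀ (k : ℕ) (a b : G), a ^ (p ^ k) = b ^ (p ^ k) → a = b :=
    St19.pk_inj hp ω hquot hcomm htop hgt hpow
  have minj : ∀ (M : ℕ), ¬ p ∣ M → ∀ a b : G, a ^ M = b ^ M → a = b :=
    St19.coprime_inj hp ω hquot hcomm htop hgt hpow
  constructor
  · -- (a)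
    intro g n hn hgZ
    have hfact : p ^ (n.factorization p) * (n / p ^ (n.factorization p)) = n :=
      Nat.ordProj_mul_ordCompl_eq_self n p
    set k := n.factorization p with hk
    set M := n / p ^ (n.factorization p) with hM
    have hpM : ¬ p ∣ M := Nat.not_dvd_ordCompl hp hn.ne'
    -- first: g^M is central
    have hgM : ∀ x : G, x * g ^ M * x⁻¹ = g ^ M := by
      intro x
      apply pkinj k
      have hcen := Subgroup.mem_center_iff.mp hgZ x
      have h1 : (x * g ^ M * x⁻¹) ^ (p ^ k) = x * g ^ n * x⁻¹ := by
        rw [St19.conjpow, ← pow_mul, mul_comm M (p ^ k), hfact]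
      have h2 : (g ^ M) ^ (p ^ k) = g ^ n := by
        rw [← pow_mul, mul_comm M (p ^ k), hfact]
      rw [h1, h2, hcen]
      group
    -- then: g is central
    rw [Subgroup.mem_center_iff]
    intro x
    have hxg : x * g * x⁻¹ = g := by
      apply minj M hpM
      rw [St19.conjpow]
      exact hgM x
    calc x * g = (x * g * x⁻¹) * x := by group
      _ = g * x := by rw [hxg]
  · -- (b)
    intro U hU u hu
    constructor
    · intro hcommU
      rw [Subgroup.mem_center_iff]
      intro x
      obtain ⟨ν, hν⟩ := hU
      set k := ⌈ν⌉₊ with hkdef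
      have hxk : x ^ (p ^ k) ∈ U := by
        apply hν
        have h1 : ω (x ^ (p ^ k)) = ω x + ((k : ℝ) : WithTop ℝ) :=
          St19.omega_pow_pk hpow k x
        rw [h1]
        have h2 : ((ν : ℝ) : WithTop ℝ) ≤ ((k : ℝ) : WithTop ℝ) :=
          WithTop.coe_le_coe.mpr (Nat.le_ceil ν)
        refine le_trans h2 (le_add_of_nonneg_left ?_)
        have h3 : (2 : ℝ) ≤ (p : ℝ) := by exact_mod_cast hp.two_le
        refine le_of_lt (lt_of_le_of_lt ?_ (hgt x))
        rw [show ((0 : WithTop ℝ)) = (((0 : ℝ)) : WithTop ℝ) by norm_cast]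
        apply WithTop.coe_le_coe.mpr
        apply inv_nonneg.mpr
        linarith
      have hcom := hcommU _ hxk
      have hconj : (u * x * u⁻¹) ^ (p ^ k) = x ^ (p ^ k) := by
        rw [St19.conjpow, hcom]
        group
      have hfix : u * x * u⁻¹ = x := pkinj k _ _ hconj
      conv_lhs => rw [← hfix]
      group
    · intro huZ x hx
      exact (Subgroup.mem_center_iff.mp huZ x).symm
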